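/- For n ≥ 3, L > 0, and 0 < ε < (L/(n−1))(n/2 − 1): with b_1 = −nL/(2(n−1)) − ε and x = L, we have max(0, x + b_1) = L(n/2 − 1)/(n−1) − ε > 0, whereas with x = nL/(n−1) and b_i = −nL/(n−1) we get max(0, x + b_i) = 0; hence the hinge objective of the solution (0, nL/(n−1), …, nL/(n−1)) equals 0, which is strictly less than the hinge objective of the solution (L, …, L), which equals L(n/2 − 1)/(n−1) − ε. -/

import Mathlib

theorem stmt_12 (n : ℕ) (hn : 3 ≤ n) (L ε : ℝ) (hL : 0 < L)
    (hε0 : 0 < ε) (hε1 : ε < (L / (n - 1)) * (n / 2 - 1))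
    (b : Fin n → ℝ)
    (hb1 : b ⟨0, by omega⟩ = -(n * L) / (2 * (n - 1)) - ε)
    (hbi : ∀ i : Fin n, i ≠ ⟨0, by omega⟩ → b i = -(n * L) / (n - 1))
    (x1 x2 : Fin n → ℝ)
    (hx1 : ∀ i, x1 i = L)
    (hx2 : ∀ i : Fin n, x2 i = if i = ⟨0, by omega⟩ then 0 else n * L / (n - 1)) :
    max 0 (L + b ⟨0, by omega⟩) = L * (n / 2 - 1) / (n - 1) - ε ∧
    0 < L * (n / 2 - 1) / (n - 1) - ε ∧
    (∀ i : Fin n, i ≠ ⟨0, by omega⟩ → max 0 (n * L / (n - 1) + b i) = 0) ∧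
    (∑ i, max 0 (x2 i + b i) = 0) ∧
    (∑ i, max 0 (x1 i + b i) = L * (n / 2 - 1) / (n - 1) - ε) ∧
    (∑ i, max 0 (x2 i + b i) < ∑ i, max 0 (x1 i + b i)) := by
  have hN : (3 : ℝ) ≤ (n : ℝ) := by exact_mod_cast hn
  have hN1 : (0 : ℝ) < (n : ℝ) - 1 := by linarith
  have hN1' : ((n : ℝ) - 1) ≠ 0 := ne_of_gt hN1
  have hVpos : 0 < L * ((n : ℝ) / 2 - 1) / ((n : ℝ) - 1) - ε := by
    have : (L / ((n : ℝ) - 1)) * ((n : ℝ) / 2 - 1) = L * ((n : ℝ) / 2 - 1) / ((n : ℝ) - 1) := by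
      ring
    linarith [hε1, this ▸ hε1]
  have key1 : L + b ⟨0, by omega⟩ = L * ((n : ℝ) / 2 - 1) / ((n : ℝ) - 1) - ε := by
    rw [hb1]; field_simp; ring
  have h1 : max 0 (L + b ⟨0, by omega⟩) = L * ((n : ℝ) / 2 - 1) / ((n : ℝ) - 1) - ε := by
    rw [key1]; exact max_eq_right hVpos.le
  have h3 : ∀ i : Fin n, i ≠ ⟨0, by omega⟩ → max 0 ((n : ℝ) * L / ((n : ℝ) - 1) + b i) = 0 := by
    intro i hi
    rw [hbi i hi]
    have : (n : ℝ) * L / ((n : ℝ) - 1) + -((n : ℝ) * L) / ((n : ℝ) - 1) = 0 := by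
      field_simp; ring
    rw [this]; simp
  have hb0neg : b ⟨0, by omega⟩ < 0 := by
    rw [hb1, neg_div]
    have : 0 < (n : ℝ) * L / (2 * ((n : ℝ) - 1)) := by positivity
    linarith
  have h4 : ∑ i, max 0 (x2 i + b i) = 0 := by
    apply Finset.sum_eq_zero
    intro i _
    rw [hx2 i]
    by_cases hi : i = ⟨0, by omega⟩
    · rw [if_pos hi, hi, zero_add, max_eq_left hb0neg.le]
    · rw [if_neg hi]; exact h3 i hi
  have h5 : ∑ i, max 0 (x1 i + b i) = L * ((n : ℝ) / 2 - 1) / ((n : ℝ) - 1) - ε := by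
    rw [Finset.sum_eq_single (⟨0, by omega⟩ : Fin n)]
    · rw [hx1]; exact h1
    · intro i _ hi
      rw [hx1, hbi i hi]
      apply max_eq_left
      have hle : L ≤ (n : ℝ) * L / ((n : ℝ) - 1) := by
        rw [le_div_iff₀ hN1]; nlinarith
      rw [neg_div]
      linarith
    · intro h; exact absurd (Finset.mem_univ _) h
  exact ⟨h1, hVpos, h3, h4, h5, by rw [h4, h5]; exact hVpos⟩
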